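/- For a signed graph G, det(L_G) = ∑_{c ∈ M^-} 2^{nc(c)}, where M^- is the set of maximal elements of the positive-circle-free activation classes of contributors of G and nc(c) is the number of negative circles in c. In particular det(L_G) ≥ 0, and det(L_G) = 0 if and only if every activation class contains a positive circle in its maximal element. -/

import Mathlib

open scoped Classical

/-- An oriented hypergraph on vertex set `V`: edges `E`, incidences `I`,
incidence function given by `vtx` and `edge`, and incidence orientations `sgn`. -/
structure OrientedHypergraph (V : Type) [Fintype V] [DecidableEq V] where
  E : Type
  I : Type
  [fintypeE : Fintype E]
  [fintypeI : Fintype I]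
  [decEqI : DecidableEq I]
  vtx : I → V
  edge : I → E
  sgn : I → ℤ

attribute [instance] OrientedHypergraph.fintypeE OrientedHypergraph.fintypeI
  OrientedHypergraph.decEqI

variable {V : Type} [Fintype V] [DecidableEq V]

/-- A bidirected graph: an oriented hypergraph in which every edge has exactly two
incidences, recorded by the fixed-point-free involution `τ` pairing the two
incidences of each edge. -/
structure Bidirected (V : Type) [Fintype V] [DecidableEq V]
    extends OrientedHypergraph V where
  τ : I → I
  τ_invol : ∀ i, τ (τ i) = i
  τ_ne : ∀ i, τ i ≠ i
  τ_edge : ∀ i, edge (τ i) = edge i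
  edge_two : ∀ i j, edge i = edge j → j = i ∨ j = τ i

/-- A pre-contributor: an incidence-preserving map of `|V|` disjoint directed paths
of length one into `G`, sending the tail `t_v` to `v`.  The component at `v` is the
weak walk with tail incidence `i1 v` and head incidence `i2 v`. -/
structure PreContributor (G : OrientedHypergraph V) where
  i1 : V → G.I
  i2 : V → G.I
  tail_eq : ∀ v, G.vtx (i1 v) = v
  edge_eq : ∀ v, G.edge (i1 v) = G.edge (i2 v)

namespace PreContributor

variable {G : OrientedHypergraph V}

/-- The head vertex of the component of `p` at `v`: `p(h_v)`. -/
def head (p : PreContributor G) (v : V) : V := G.vtx (p.i2 v)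

/-- A contributor: a pre-contributor whose heads cover `V`, `{p(h_v) | v ∈ V} = V`. -/
def IsContributor (p : PreContributor G) : Prop := Function.Surjective p.head

/-- The component of `p` at `v` is a backstep `(v,i,e,i,v)`. -/
def BackstepAt (p : PreContributor G) (v : V) : Prop := p.i2 v = p.i1 v

/-- The sign of the length-one weak walk of `p` at `v`. -/
def walkSign (p : PreContributor G) (v : V) : ℤ := -(G.sgn (p.i1 v) * G.sgn (p.i2 v))

/-- Two vertices lie in the same component of the image of `p`. -/
def compRel (p : PreContributor G) : V → V → Prop :=
  Relation.EqvGen (fun v w => p.head v = w)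

/-- The setoid of components of `p`. -/
def compSetoid (p : PreContributor G) : Setoid V := Relation.EqvGen.setoid (fun v w => p.head v = w)

/-- A component class is a (lone) backstep. -/
def IsBackstepClass (p : PreContributor G) (q : Quotient p.compSetoid) : Prop :=
  ∃ v, Quotient.mk p.compSetoid v = q ∧ p.head v = v ∧ p.BackstepAt v

/-- The number of vertices in a component class. -/
noncomputable def compCard (p : PreContributor G) (q : Quotient p.compSetoid) : ℕ :=
  Nat.card {v : V // Quotient.mk p.compSetoid v = q}

/-- The sign of a component class: the product of the signs of its weak walks. -/
noncomputable def compSign (p : PreContributor G) (q : Quotient p.compSetoid) : ℤ :=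
  ∏ᶠ v ∈ {v : V | Quotient.mk p.compSetoid v = q}, p.walkSign v

/-- `tc`: total number of circles of a contributor (backsteps do not count). -/
noncomputable def tc (p : PreContributor G) : ℕ :=
  Nat.card {q : Quotient p.compSetoid // ¬ p.IsBackstepClass q}

/-- `pc`: number of positive circles of a contributor. -/
noncomputable def pc (p : PreContributor G) : ℕ :=
  Nat.card {q : Quotient p.compSetoid // ¬ p.IsBackstepClass q ∧ p.compSign q = 1}

/-- `nc`: number of negative circles of a contributor. -/
noncomputable def nc (p : PreContributor G) : ℕ :=
  Nat.card {q : Quotient p.compSetoid // ¬ p.IsBackstepClass q ∧ p.compSign q = -1}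

/-- `oc`: number of odd circles of a contributor. -/
noncomputable def oc (p : PreContributor G) : ℕ :=
  Nat.card {q : Quotient p.compSetoid // ¬ p.IsBackstepClass q ∧ Odd (p.compCard q)}

/-- `ec`: number of even circles of a contributor. -/
noncomputable def ec (p : PreContributor G) : ℕ :=
  Nat.card {q : Quotient p.compSetoid // ¬ p.IsBackstepClass q ∧ Even (p.compCard q)}

end PreContributor

/-- The `V × E` incidence matrix of an oriented hypergraph. -/
noncomputable def OrientedHypergraph.inc (G : OrientedHypergraph V) : Matrix V G.E ℤ :=
  fun v e => ∑ᶠ i ∈ {i : G.I | G.vtx i = v ∧ G.edge i = e}, G.sgn i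

/-- The oriented hypergraphic Laplacian `L_G = H_G H_Gᵀ`. -/
noncomputable def OrientedHypergraph.lap (G : OrientedHypergraph V) : Matrix V V ℤ :=
  G.inc * G.inc.transpose

namespace Bidirected

variable {G : Bidirected V}

/-- Packing the directed adjacency of `p` at `v` into a backstep. -/
def pack (G : Bidirected V) (p : PreContributor G.toOrientedHypergraph) (v : V) :
    PreContributor G.toOrientedHypergraph where
  i1 := p.i1
  i2 := fun u => if u = v then p.i1 v else p.i2 u
  tail_eq := p.tail_eq
  edge_eq := fun u => by by_cases h : u = v <;> simp [h, p.edge_eq u]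

/-- Unpacking the backstep of `p` at `v` into the unique directed adjacency out of
`v` completing the edge. -/
def unpack (G : Bidirected V) (p : PreContributor G.toOrientedHypergraph) (v : V) :
    PreContributor G.toOrientedHypergraph where
  i1 := p.i1
  i2 := fun u => if u = v then G.τ (p.i1 v) else p.i2 u
  tail_eq := p.tail_eq
  edge_eq := fun u => by
    by_cases h : u = v
    · simp [h, G.τ_edge]
    · simp [h, p.edge_eq u]

end Bidirected
namespace Bidirected

variable {V : Type} [Fintype V] [DecidableEq V]

/-- A sequence of vertices is a valid sequence of unpackings from `p`:
each step unpacks a backstep. -/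
def UnpackSeqOK (G : Bidirected V) :
    PreContributor G.toOrientedHypergraph → List V → Prop
  | _, [] => True
  | p, v :: l => p.BackstepAt v ∧ UnpackSeqOK G (G.unpack p v) l

/-- A sequence of vertices is a valid sequence of packings from `p`:
each step packs a directed adjacency. -/
def PackSeqOK (G : Bidirected V) :
    PreContributor G.toOrientedHypergraph → List V → Prop
  | _, [] => True
  | p, v :: l => ¬ p.BackstepAt v ∧ PackSeqOK G (G.pack p v) l

/-- `d` is obtained from `c` by activating a circle: a minimal sequence of
unpackings producing a new contributor, which has one more circle. -/
def Activates (G : Bidirected V) (c d : PreContributor G.toOrientedHypergraph) : Prop :=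
  c.IsContributor ∧ d.IsContributor ∧
    ∃ l : List V, G.UnpackSeqOK c l ∧ List.foldl G.unpack c l = d ∧
      d.tc = c.tc + 1 ∧
      ∀ l' : List V, l' <+: l → l' ≠ [] → l' ≠ l →
        ¬ (List.foldl G.unpack c l').IsContributor

/-- `d` is obtained from `c` by deactivating a circle: a minimal sequence of
packings producing a new contributor, which has one fewer circle. -/
def Deactivates (G : Bidirected V) (c d : PreContributor G.toOrientedHypergraph) : Prop :=
  c.IsContributor ∧ d.IsContributor ∧
    ∃ l : List V, G.PackSeqOK c l ∧ List.foldl G.pack c l = d ∧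
      c.tc = d.tc + 1 ∧
      ∀ l' : List V, l' <+: l → l' ≠ [] → l' ≠ l →
        ¬ (List.foldl G.pack c l').IsContributor

/-- The activation partial order `≤_a`. -/
def leA (G : Bidirected V) : PreContributor G.toOrientedHypergraph →
    PreContributor G.toOrientedHypergraph → Prop :=
  Relation.ReflTransGen G.Activates

/-- Activation equivalence `~_a`; its classes are the activation classes. -/
def ActEq (G : Bidirected V) (c d : PreContributor G.toOrientedHypergraph) : Prop :=
  G.leA c d ∨ G.leA d c

/-- Two vertices are linked by an edge of `G`. -/
def linkR (G : Bidirected V) (v w : V) : Prop :=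
  ∃ i : G.I, G.vtx i = v ∧ G.vtx (G.τ i) = w

/-- Every connected component of `G` contains at least one adjacency
(an edge whose two incidences lie at two distinct vertices). -/
def EveryComponentHasAdjacency (G : Bidirected V) : Prop :=
  ∀ v : V, ∃ w : V, Relation.EqvGen G.linkR v w ∧
    ∃ i : G.I, G.vtx i = w ∧ G.vtx (G.τ i) ≠ w

end Bidirected


set_option linter.unusedSectionVars false
/-! ### Auxiliary development -/

namespace DLA

open PreContributor Finset

variable {V : Type} [Fintype V] [DecidableEq V] {G : Bidirected V}

lemma PC.ext {p q : PreContributor G.toOrientedHypergraph}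
    (h1 : p.i1 = q.i1) (h2 : p.i2 = q.i2) : p = q := by
  cases p; cases q; simp_all

noncomputable instance : Fintype (PreContributor G.toOrientedHypergraph) :=
  Fintype.ofInjective (fun p => (p.i1, p.i2)) (by
    intro p q h
    exact PC.ext (congrArg Prod.fst h) (congrArg Prod.snd h))

/-- The "target vertex" map determined by the tails `f`. -/
def wmap (G : Bidirected V) (f : V → G.I) : V → V := fun v => G.vtx (G.τ (f v))

/-- `C` is a cycle of the map `wmap f`. -/
def IsCyc (G : Bidirected V) (f : V → G.I) (C : Finset V) : Prop :=
  C.Nonempty ∧ (∀ v ∈ C, wmap G f v ∈ C) ∧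
    ∀ v ∈ C, ∀ u ∈ C, ∃ n : ℕ, (wmap G f)^[n] v = u

/-- All cycles of `wmap f`. -/
noncomputable def cycF (G : Bidirected V) (f : V → G.I) : Finset (Finset V) :=
  Finset.univ.filter (IsCyc G f)

lemma mem_cycF {f : V → G.I} {C : Finset V} : C ∈ cycF G f ↔ IsCyc G f C := by
  simp [cycF]

lemma iterate_mem_of_closed {w : V → V} {X : Set V} (hX : ∀ v ∈ X, w v ∈ X)
    {v : V} (hv : v ∈ X) (n : ℕ) : w^[n] v ∈ X := by
  induction n with
  | zero => simpa
  | succ n ih => rw [Function.iterate_succ_apply']; exact hX _ ih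

lemma cyc_eq_orbit {f : V → G.I} {C : Finset V} (h : IsCyc G f C) {v : V} (hv : v ∈ C)
    (u : V) : u ∈ C ↔ ∃ n : ℕ, (wmap G f)^[n] v = u := by
  constructor
  · intro hu; exact h.2.2 v hv u hu
  · rintro ⟨n, rfl⟩
    exact iterate_mem_of_closed (X := (C : Set V)) (fun x hx => h.2.1 x hx) hv n

lemma cyc_inter {f : V → G.I} {C D : Finset V} (hC : IsCyc G f C) (hD : IsCyc G f D)
    {v : V} (hvC : v ∈ C) (hvD : v ∈ D) : C = D := by
  ext u
  rw [cyc_eq_orbit hC hvC, cyc_eq_orbit hD hvD]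

/-- dichotomy for `i2` in a bidirected graph. -/
lemma i2_eq (p : PreContributor G.toOrientedHypergraph) (v : V) :
    p.i2 v = p.i1 v ∨ p.i2 v = G.τ (p.i1 v) :=
  G.edge_two (p.i1 v) (p.i2 v) (p.edge_eq v)

lemma head_of_bst {p : PreContributor G.toOrientedHypergraph} {v : V}
    (h : p.BackstepAt v) : p.head v = v := by
  rw [PreContributor.head, h, p.tail_eq]

lemma head_of_not_bst {p : PreContributor G.toOrientedHypergraph} {v : V}
    (h : ¬ p.BackstepAt v) : p.head v = wmap G p.i1 v := by
  rcases i2_eq p v with h' | h'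
  · exact absurd h' h
  · rw [PreContributor.head, h']; rfl

lemma contrib_bij {p : PreContributor G.toOrientedHypergraph} (hp : p.IsContributor) :
    Function.Bijective p.head :=
  Finite.surjective_iff_bijective.1 hp

/-- non-backstep vertices are closed under head for a contributor. -/
lemma nb_closed {p : PreContributor G.toOrientedHypergraph} (hp : p.IsContributor)
    {v : V} (h : ¬ p.BackstepAt v) : ¬ p.BackstepAt (p.head v) := by
  intro hb
  have h1 : p.head (p.head v) = p.head v := head_of_bst hb
  have := (contrib_bij hp).1 h1
  rw [this] at hb
  exact h hb

/-- iterates of head stay non-backstep and agree with iterates of `wmap`. -/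
lemma key_iter {p : PreContributor G.toOrientedHypergraph} (hp : p.IsContributor)
    {v : V} (h : ¬ p.BackstepAt v) (n : ℕ) :
    ¬ p.BackstepAt (p.head^[n] v) ∧ p.head^[n] v = (wmap G p.i1)^[n] v := by
  induction n with
  | zero => exact ⟨h, rfl⟩
  | succ n ih =>
    rw [Function.iterate_succ_apply', Function.iterate_succ_apply']
    exact ⟨nb_closed hp ih.1, by rw [head_of_not_bst ih.1, ih.2]⟩

end DLA

namespace DLA

open PreContributor Finset

variable {V : Type} [Fintype V] [DecidableEq V] {G : Bidirected V}

/-- the permutation of a contributor. -/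
noncomputable def prm (p : PreContributor G.toOrientedHypergraph)
    (hp : p.IsContributor) : Equiv.Perm V :=
  Equiv.ofBijective p.head (contrib_bij hp)

lemma prm_apply {p : PreContributor G.toOrientedHypergraph} (hp : p.IsContributor)
    (v : V) : prm p hp v = p.head v := rfl

lemma perm_pow_apply (e : Equiv.Perm V) (n : ℕ) (x : V) : (e ^ n) x = (⇑e)^[n] x := by
  induction n generalizing x with
  | zero => rfl
  | succ n ih =>
    rw [pow_succ, Equiv.Perm.mul_apply, Function.iterate_succ_apply, ih]

lemma exists_iterate_id {p : PreContributor G.toOrientedHypergraph}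
    (hp : p.IsContributor) : ∃ k : ℕ, 0 < k ∧ ∀ x, p.head^[k] x = x := by
  refine ⟨orderOf (prm p hp), orderOf_pos _, fun x => ?_⟩
  have h2 : ((prm p hp) ^ orderOf (prm p hp)) x = x := by
    rw [pow_orderOf_eq_one]; rfl
  rw [perm_pow_apply] at h2
  exact h2

/-- head-orbit relation is symmetric for contributors. -/
lemma orbit_symm {p : PreContributor G.toOrientedHypergraph} (hp : p.IsContributor)
    {v u : V} (h : ∃ n : ℕ, p.head^[n] v = u) : ∃ m : ℕ, p.head^[m] u = v := by
  obtain ⟨n, rfl⟩ := h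
  obtain ⟨k, hk, hid⟩ := exists_iterate_id hp
  refine ⟨(k - 1) * n, ?_⟩
  have h1 : (k - 1) * n + n = k * n := by
    cases k with
    | zero => omega
    | succ k => rw [Nat.succ_sub_one, Nat.succ_mul]
  rw [← Function.iterate_add_apply, h1, Function.iterate_mul]
  exact Function.iterate_fixed (by simp [hid]) n

lemma compRel_iff {p : PreContributor G.toOrientedHypergraph} (hp : p.IsContributor)
    {v u : V} : p.compRel v u ↔ ∃ n : ℕ, p.head^[n] v = u := by
  constructor
  · intro h
    induction h with
    | rel a b hab => exact ⟨1, hab⟩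
    | refl => exact ⟨0, rfl⟩
    | symm a b _ ih => exact orbit_symm hp ih
    | trans a b c _ _ ih1 ih2 =>
      obtain ⟨n, rfl⟩ := ih1; obtain ⟨m, rfl⟩ := ih2
      exact ⟨m + n, Function.iterate_add_apply _ m n a⟩
  · rintro ⟨n, rfl⟩
    induction n with
    | zero => exact Relation.EqvGen.refl v
    | succ n ih =>
      rw [Function.iterate_succ_apply']
      exact Relation.EqvGen.trans _ _ _ ih (Relation.EqvGen.rel _ _ rfl)

lemma mk_eq_mk_iff {p : PreContributor G.toOrientedHypergraph} (hp : p.IsContributor)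
    {v u : V} :
    Quotient.mk p.compSetoid u = Quotient.mk p.compSetoid v ↔
      ∃ n : ℕ, p.head^[n] v = u := by
  rw [Quotient.eq]
  show p.compRel u v ↔ _
  rw [compRel_iff hp]
  exact ⟨fun h => orbit_symm hp h, fun h => orbit_symm hp h⟩

/-- the `wmap`-orbit of a vertex. -/
noncomputable def Cof (p : PreContributor G.toOrientedHypergraph) (v : V) : Finset V :=
  Finset.univ.filter (fun u => ∃ n : ℕ, (wmap G p.i1)^[n] v = u)

lemma mem_Cof {p : PreContributor G.toOrientedHypergraph} {v u : V} :
    u ∈ Cof p v ↔ ∃ n : ℕ, (wmap G p.i1)^[n] v = u := by simp [Cof]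

/-- the class of a non-backstep vertex is its `wmap`-orbit. -/
lemma class_of_not_bst {p : PreContributor G.toOrientedHypergraph}
    (hp : p.IsContributor) {v : V} (hv : ¬ p.BackstepAt v) :
    {u : V | Quotient.mk p.compSetoid u = Quotient.mk p.compSetoid v} = ↑(Cof p v) := by
  ext u
  simp only [Set.mem_setOf_eq, Finset.coe_filter, Cof, Finset.mem_filter, Finset.mem_univ,
    true_and, Set.mem_setOf_eq]
  rw [mk_eq_mk_iff hp]
  constructor
  · rintro ⟨n, rfl⟩; exact ⟨n, ((key_iter hp hv n).2).symm⟩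
  · rintro ⟨n, rfl⟩; exact ⟨n, (key_iter hp hv n).2⟩

lemma class_of_bst {p : PreContributor G.toOrientedHypergraph}
    (hp : p.IsContributor) {v : V} (hv : p.BackstepAt v) :
    {u : V | Quotient.mk p.compSetoid u = Quotient.mk p.compSetoid v} = {v} := by
  ext u
  simp only [Set.mem_setOf_eq, Set.mem_singleton_iff]
  rw [mk_eq_mk_iff hp]
  constructor
  · rintro ⟨n, rfl⟩
    exact Function.iterate_fixed (head_of_bst hv) n
  · rintro rfl; exact ⟨0, rfl⟩

lemma bst_class_iff {p : PreContributor G.toOrientedHypergraph}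
    (hp : p.IsContributor) {v : V} :
    p.IsBackstepClass (Quotient.mk p.compSetoid v) ↔ p.BackstepAt v := by
  constructor
  · rintro ⟨u, hu, -, hbu⟩
    have := class_of_bst hp hbu
    have hv : v ∈ {x : V | Quotient.mk p.compSetoid x = Quotient.mk p.compSetoid u} :=
      hu.symm
    rw [this] at hv
    rw [Set.mem_singleton_iff] at hv
    rwa [hv]
  · intro h
    exact ⟨v, rfl, head_of_bst h, h⟩

end DLA

namespace DLA

open PreContributor Finset

variable {V : Type} [Fintype V] [DecidableEq V] {G : Bidirected V}

/-- sign of a cycle. -/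
noncomputable def sgnC (G : Bidirected V) (f : V → G.I) (C : Finset V) : ℤ :=
  ∏ u ∈ C, -(G.sgn (f u) * G.sgn (G.τ (f u)))

/-- active cycles of a contributor. -/
noncomputable def Ac (p : PreContributor G.toOrientedHypergraph) : Finset (Finset V) :=
  (cycF G p.i1).filter (fun C => ∀ v ∈ C, ¬ p.BackstepAt v)

lemma mem_Ac {p : PreContributor G.toOrientedHypergraph} {C : Finset V} :
    C ∈ Ac p ↔ IsCyc G p.i1 C ∧ ∀ v ∈ C, ¬ p.BackstepAt v := by
  simp [Ac, mem_cycF]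

lemma self_mem_Cof {p : PreContributor G.toOrientedHypergraph} (v : V) : v ∈ Cof p v :=
  mem_Cof.2 ⟨0, rfl⟩

lemma Cof_not_bst {p : PreContributor G.toOrientedHypergraph} (hp : p.IsContributor)
    {v : V} (hv : ¬ p.BackstepAt v) {u : V} (hu : u ∈ Cof p v) : ¬ p.BackstepAt u := by
  obtain ⟨n, rfl⟩ := mem_Cof.1 hu
  have := key_iter hp hv n
  rw [this.2] at this
  exact this.1

lemma Cof_isCyc {p : PreContributor G.toOrientedHypergraph} (hp : p.IsContributor)
    {v : V} (hv : ¬ p.BackstepAt v) : IsCyc G p.i1 (Cof p v) := by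
  refine ⟨⟨v, self_mem_Cof v⟩, ?_, ?_⟩
  · intro u hu
    obtain ⟨n, rfl⟩ := mem_Cof.1 hu
    exact mem_Cof.2 ⟨n + 1, by rw [Function.iterate_succ_apply']⟩
  · intro a ha b hb
    obtain ⟨n, rfl⟩ := mem_Cof.1 ha
    obtain ⟨m, rfl⟩ := mem_Cof.1 hb
    obtain ⟨K, hK, hid⟩ := exists_iterate_id hp
    have hwv : (wmap G p.i1)^[K] v = v := by
      have := key_iter hp hv K
      rw [← this.2, hid v]
    refine ⟨m + (K - 1) * n, ?_⟩
    have h1 : m + (K - 1) * n + n = m + K * n := by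
      have : (K - 1) * n + n = ((K - 1) + 1) * n := (Nat.succ_mul _ _).symm
      rw [Nat.add_assoc, this, Nat.sub_add_cancel hK]
    rw [← Function.iterate_add_apply, h1, Function.iterate_add_apply,
      Function.iterate_mul]
    congr 1
    exact Function.iterate_fixed hwv n

lemma Cof_mem_Ac {p : PreContributor G.toOrientedHypergraph} (hp : p.IsContributor)
    {v : V} (hv : ¬ p.BackstepAt v) : Cof p v ∈ Ac p :=
  mem_Ac.2 ⟨Cof_isCyc hp hv, fun _ hu => Cof_not_bst hp hv hu⟩

lemma Ac_eq_Cof {p : PreContributor G.toOrientedHypergraph} (hp : p.IsContributor)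
    {C : Finset V} (hC : C ∈ Ac p) {v : V} (hv : v ∈ C) : C = Cof p v := by
  have h1 := (mem_Ac.1 hC).1
  have h2 := (mem_Ac.1 hC).2 v hv
  exact cyc_inter h1 (Cof_isCyc hp h2) hv (self_mem_Cof v)

lemma Ac_nonempty {p : PreContributor G.toOrientedHypergraph} {C : Finset V}
    (hC : C ∈ Ac p) : C.Nonempty := (mem_Ac.1 hC).1.1

lemma compSign_eq {p : PreContributor G.toOrientedHypergraph} (hp : p.IsContributor)
    {v : V} (hv : ¬ p.BackstepAt v) :
    p.compSign (Quotient.mk p.compSetoid v) = sgnC G p.i1 (Cof p v) := by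
  rw [PreContributor.compSign, class_of_not_bst hp hv, finprod_mem_coe_finset]
  refine Finset.prod_congr rfl (fun u hu => ?_)
  have hbu := Cof_not_bst hp hv hu
  rcases i2_eq p u with h | h
  · exact absurd h hbu
  · rw [PreContributor.walkSign, h]

/-- generic counting of non-backstep classes. -/
lemma card_classes (p : PreContributor G.toOrientedHypergraph) (hp : p.IsContributor)
    (φ : ℤ → Prop) :
    Nat.card {q : Quotient p.compSetoid // ¬ p.IsBackstepClass q ∧ φ (p.compSign q)} =
      ((Ac p).filter (fun C => φ (sgnC G p.i1 C))).card := by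
  have hmem : ∀ C : {C // C ∈ (Ac p).filter (fun C => φ (sgnC G p.i1 C))},
      (Ac_nonempty (Finset.mem_filter.1 C.2).1).choose ∈ C.1 :=
    fun C => (Ac_nonempty (Finset.mem_filter.1 C.2).1).choose_spec
  set pk : {C // C ∈ (Ac p).filter (fun C => φ (sgnC G p.i1 C))} → V :=
    fun C => (Ac_nonempty (Finset.mem_filter.1 C.2).1).choose with hpk
  have hnb : ∀ C, ¬ p.BackstepAt (pk C) :=
    fun C => (mem_Ac.1 (Finset.mem_filter.1 C.2).1).2 _ (hmem C)
  have hCof : ∀ C, C.1 = Cof p (pk C) :=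
    fun C => Ac_eq_Cof hp (Finset.mem_filter.1 C.2).1 (hmem C)
  have hF : ∀ C, ¬ p.IsBackstepClass (Quotient.mk p.compSetoid (pk C)) ∧
      φ (p.compSign (Quotient.mk p.compSetoid (pk C))) := by
    intro C
    refine ⟨fun h => hnb C ((bst_class_iff hp).1 h), ?_⟩
    rw [compSign_eq hp (hnb C), ← hCof C]
    exact (Finset.mem_filter.1 C.2).2
  set F : {C // C ∈ (Ac p).filter (fun C => φ (sgnC G p.i1 C))} →
      {q : Quotient p.compSetoid // ¬ p.IsBackstepClass q ∧ φ (p.compSign q)} :=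
    fun C => ⟨Quotient.mk p.compSetoid (pk C), hF C⟩ with hFdef
  have hbij : Function.Bijective F := by
    constructor
    · intro C C' h
      have h1 : Quotient.mk p.compSetoid (pk C) = Quotient.mk p.compSetoid (pk C') :=
        congrArg Subtype.val h
      obtain ⟨n, hn⟩ := (mk_eq_mk_iff hp).1 h1.symm
      have h2 : pk C' ∈ Cof p (pk C) := by
        rw [mem_Cof]
        exact ⟨n, by rw [← (key_iter hp (hnb C) n).2, hn]⟩
      apply Subtype.ext
      rw [hCof C, hCof C']
      exact cyc_inter (Cof_isCyc hp (hnb C)) (Cof_isCyc hp (hnb C')) h2 (self_mem_Cof _)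
    · rintro ⟨q, hq1, hq2⟩
      obtain ⟨v, rfl⟩ := q.exists_rep
      have hv : ¬ p.BackstepAt v := fun h => hq1 ((bst_class_iff hp).2 h)
      have hCv : Cof p v ∈ (Ac p).filter (fun C => φ (sgnC G p.i1 C)) := by
        rw [Finset.mem_filter]
        refine ⟨Cof_mem_Ac hp hv, ?_⟩
        rw [← compSign_eq hp hv]
        exact hq2
      refine ⟨⟨Cof p v, hCv⟩, ?_⟩
      apply Subtype.ext
      show Quotient.mk p.compSetoid (pk ⟨Cof p v, hCv⟩) = Quotient.mk p.compSetoid v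
      rw [mk_eq_mk_iff hp]
      have := hmem ⟨Cof p v, hCv⟩
      obtain ⟨n, hn⟩ := mem_Cof.1 this
      exact ⟨n, by rw [(key_iter hp hv n).2, hn]⟩
  calc Nat.card {q : Quotient p.compSetoid // ¬ p.IsBackstepClass q ∧ φ (p.compSign q)}
      = Nat.card {C // C ∈ (Ac p).filter (fun C => φ (sgnC G p.i1 C))} :=
        Nat.card_congr (Equiv.ofBijective F hbij).symm
    _ = ((Ac p).filter (fun C => φ (sgnC G p.i1 C))).card := by
        rw [Nat.card_eq_fintype_card, Fintype.card_coe]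

lemma pc_eq {p : PreContributor G.toOrientedHypergraph} (hp : p.IsContributor) :
    p.pc = ((Ac p).filter (fun C => sgnC G p.i1 C = 1)).card := by
  have h := card_classes p hp (fun z => z = 1)
  rwa [Finset.filter_congr_decidable] at h

lemma nc_eq {p : PreContributor G.toOrientedHypergraph} (hp : p.IsContributor) :
    p.nc = ((Ac p).filter (fun C => sgnC G p.i1 C = -1)).card := by
  have h := card_classes p hp (fun z => z = -1)
  rwa [Finset.filter_congr_decidable] at h

lemma tc_eq {p : PreContributor G.toOrientedHypergraph} (hp : p.IsContributor) :
    p.tc = (Ac p).card := by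
  have h := card_classes p hp (fun _ => True)
  rw [Finset.filter_true] at h
  rw [← h, PreContributor.tc]
  exact Nat.card_congr (Equiv.subtypeEquivRight (by simp))

end DLA

namespace DLA

open PreContributor Finset

variable {V : Type} [Fintype V] [DecidableEq V] {G : Bidirected V}

lemma cyc_w_surj {f : V → G.I} {C : Finset V} (hC : IsCyc G f C) {u : V} (hu : u ∈ C) :
    ∃ x ∈ C, wmap G f x = u := by
  obtain ⟨m, hm⟩ := hC.2.2 (wmap G f u) (hC.2.1 u hu) u hu
  refine ⟨(wmap G f)^[m] u, ?_, ?_⟩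
  · exact Finset.mem_coe.1
      (iterate_mem_of_closed (X := (C : Set V)) (fun x hx => hC.2.1 x hx) hu m)
  · have h1 : wmap G f ((wmap G f)^[m] u) = (wmap G f)^[m + 1] u :=
      (Function.iterate_succ_apply' (wmap G f) m u).symm
    rw [h1, Function.iterate_succ_apply, hm]

/-- the contributor determined by tails `f` and active cycles `A`. -/
noncomputable def mkC (G : Bidirected V) (f : V → G.I) (hf : ∀ v, G.vtx (f v) = v)
    (A : Finset (Finset V)) : PreContributor G.toOrientedHypergraph where
  i1 := f
  i2 := fun v => if v ∈ A.biUnion id then G.τ (f v) else f v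
  tail_eq := hf
  edge_eq := fun v => by
    by_cases h : v ∈ A.biUnion id
    · simp only [h, if_true]
      exact (G.τ_edge (f v)).symm
    · simp [h]

lemma mem_biun {A : Finset (Finset V)} {v : V} :
    v ∈ A.biUnion id ↔ ∃ C ∈ A, v ∈ C := by
  simp [Finset.mem_biUnion]

lemma bst_mkC {f : V → G.I} {hf : ∀ v, G.vtx (f v) = v} {A : Finset (Finset V)} {v : V} :
    (mkC G f hf A).BackstepAt v ↔ v ∉ A.biUnion id := by
  unfold PreContributor.BackstepAt mkC
  by_cases h : v ∈ A.biUnion id <;> simp [h, G.τ_ne (f v)]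

lemma head_mkC_mem {f : V → G.I} {hf : ∀ v, G.vtx (f v) = v} {A : Finset (Finset V)}
    {v : V} (h : v ∈ A.biUnion id) : (mkC G f hf A).head v = wmap G f v := by
  unfold PreContributor.head mkC wmap
  simp [h]

lemma head_mkC_not_mem {f : V → G.I} {hf : ∀ v, G.vtx (f v) = v} {A : Finset (Finset V)}
    {v : V} (h : v ∉ A.biUnion id) : (mkC G f hf A).head v = v := by
  unfold PreContributor.head mkC
  simp [h, hf]

lemma mkC_contrib {f : V → G.I} (hf : ∀ v, G.vtx (f v) = v) {A : Finset (Finset V)}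
    (hA : ∀ C ∈ A, IsCyc G f C) : (mkC G f hf A).IsContributor := by
  intro u
  by_cases h : u ∈ A.biUnion id
  · obtain ⟨C, hC, huC⟩ := mem_biun.1 h
    obtain ⟨x, hx, hwx⟩ := cyc_w_surj (hA C hC) huC
    refine ⟨x, ?_⟩
    rw [head_mkC_mem (mem_biun.2 ⟨C, hC, hx⟩), hwx]
  · exact ⟨u, head_mkC_not_mem h⟩

lemma Ac_mkC {f : V → G.I} (hf : ∀ v, G.vtx (f v) = v) {A : Finset (Finset V)}
    (hA : ∀ C ∈ A, IsCyc G f C) : Ac (mkC G f hf A) = A := by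
  ext C
  rw [mem_Ac]
  show IsCyc G f C ∧ (∀ v ∈ C, ¬(mkC G f hf A).BackstepAt v) ↔ C ∈ A
  constructor
  · rintro ⟨hcyc, hnb⟩
    obtain ⟨v, hv⟩ := hcyc.1
    have := hnb v hv
    rw [bst_mkC, not_not] at this
    obtain ⟨D, hD, hvD⟩ := mem_biun.1 this
    rwa [cyc_inter hcyc (hA D hD) hv hvD]
  · intro hC
    refine ⟨hA C hC, fun v hv => ?_⟩
    rw [bst_mkC, not_not]
    exact mem_biun.2 ⟨C, hC, hv⟩

lemma nb_iff_mem_biun {p : PreContributor G.toOrientedHypergraph}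
    (hp : p.IsContributor) {v : V} :
    ¬ p.BackstepAt v ↔ v ∈ (Ac p).biUnion id := by
  constructor
  · intro h
    exact mem_biun.2 ⟨Cof p v, Cof_mem_Ac hp h, self_mem_Cof v⟩
  · intro h
    obtain ⟨C, hC, hvC⟩ := mem_biun.1 h
    exact (mem_Ac.1 hC).2 v hvC

lemma mkC_recover {p : PreContributor G.toOrientedHypergraph} (hp : p.IsContributor) :
    mkC G p.i1 p.tail_eq (Ac p) = p := by
  refine PC.ext rfl (funext fun v => ?_)
  show (if v ∈ (Ac p).biUnion id then G.τ (p.i1 v) else p.i1 v) = p.i2 v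
  by_cases h : v ∈ (Ac p).biUnion id
  · rw [if_pos h]
    have hnb := (nb_iff_mem_biun hp).2 h
    rcases i2_eq p v with h' | h'
    · exact absurd h' hnb
    · rw [h']
  · rw [if_neg h]
    have hb : p.BackstepAt v := by
      by_contra hnb
      exact h ((nb_iff_mem_biun hp).1 hnb)
    rw [hb]

lemma Ac_sub_cycF (p : PreContributor G.toOrientedHypergraph) : Ac p ⊆ cycF G p.i1 :=
  Finset.filter_subset _ _

lemma sgnC_pm (hsgn : ∀ i, G.sgn i = 1 ∨ G.sgn i = -1) (f : V → G.I) (C : Finset V) :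
    sgnC G f C = 1 ∨ sgnC G f C = -1 := by
  unfold sgnC
  refine Finset.prod_induction _ (fun z => z = 1 ∨ z = -1) ?_ (Or.inl rfl) ?_
  · rintro a b (ha | ha) (hb | hb) <;> rw [ha, hb] <;> norm_num
  · intro u _
    rcases hsgn (f u) with h1 | h1 <;> rcases hsgn (G.τ (f u)) with h2 | h2 <;>
      rw [h1, h2] <;> norm_num

end DLA

namespace DLA

open PreContributor Finset

variable {V : Type} [Fintype V] [DecidableEq V] {G : Bidirected V}

lemma prod_neg_sgn (f : V → G.I) (C : Finset V) :
    sgnC G f C = (-1) ^ C.card * ∏ u ∈ C, G.sgn (f u) * G.sgn (G.τ (f u)) := by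
  unfold sgnC
  rw [← Finset.prod_const, ← Finset.prod_mul_distrib]
  exact Finset.prod_congr rfl (fun u _ => by ring)

lemma cyc_no_fixed {f : V → G.I} {C : Finset V} (hC : IsCyc G f C)
    (hcard : 2 ≤ C.card) {v : V} (hv : v ∈ C) : wmap G f v ≠ v := by
  intro hfix
  have hsub : C ⊆ {v} := by
    intro u hu
    obtain ⟨n, rfl⟩ := hC.2.2 v hv u hu
    rw [Function.iterate_fixed hfix n]
    exact Finset.mem_singleton_self v
  have := Finset.card_le_card hsub
  simp at this
  omega

theorem val_eq (hsgn : ∀ i, G.sgn i = 1 ∨ G.sgn i = -1) :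
    ∀ (n : ℕ) (p : PreContributor G.toOrientedHypergraph) (hp : p.IsContributor),
      (Ac p).card = n →
      ((Equiv.Perm.sign (prm p hp) : ℤˣ) : ℤ) * ∏ v, G.sgn (p.i1 v) * G.sgn (p.i2 v) =
        ∏ C ∈ Ac p, (-(sgnC G p.i1 C)) := by
  intro n
  induction n with
  | zero =>
    intro p hp hcard
    have hAc : Ac p = ∅ := Finset.card_eq_zero.1 hcard
    have hbst : ∀ v, p.BackstepAt v := by
      intro v
      by_contra h
      have := (nb_iff_mem_biun hp).1 h
      rw [hAc] at this
      simp at this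
    have hprm : prm p hp = 1 := by
      apply Equiv.ext
      intro v
      rw [prm_apply, head_of_bst (hbst v)]
      exact (Equiv.Perm.one_apply v).symm
    rw [hAc, hprm]
    simp only [map_one, Units.val_one, Finset.prod_empty, one_mul]
    apply Finset.prod_eq_one
    intro v _
    rw [hbst v]
    rcases hsgn (p.i1 v) with h | h <;> rw [h] <;> norm_num
  | succ n ih =>
    intro p hp hcard
    have hne : (Ac p).Nonempty := Finset.card_pos.1 (by omega)
    obtain ⟨C, hC⟩ := hne
    set f := p.i1 with hf
    have hCcyc : IsCyc G f C := (mem_Ac.1 hC).1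
    have hCnb : ∀ v ∈ C, ¬ p.BackstepAt v := (mem_Ac.1 hC).2
    have hA' : ∀ D ∈ (Ac p).erase C, IsCyc G f D := by
      intro D hD
      exact (mem_Ac.1 (Finset.mem_of_mem_erase hD)).1
    set p' := mkC G f p.tail_eq ((Ac p).erase C) with hp'def
    have hp' : p'.IsContributor := mkC_contrib p.tail_eq hA'
    have hAc' : Ac p' = (Ac p).erase C := Ac_mkC p.tail_eq hA'
    have hcard' : (Ac p').card = n := by
      rw [hAc', Finset.card_erase_of_mem hC]; omega
    -- membership facts
    have hdisj : ∀ v ∈ C, v ∉ ((Ac p).erase C).biUnion id := by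
      intro v hv h
      obtain ⟨D, hD, hvD⟩ := mem_biun.1 h
      have := cyc_inter hCcyc (hA' D hD) hv hvD
      rw [this] at hD
      exact (Finset.notMem_erase D (Ac p)) hD
    have hsplit : ∀ v, v ∈ (Ac p).biUnion id ↔ v ∈ C ∨ v ∈ ((Ac p).erase C).biUnion id := by
      intro v
      rw [mem_biun, mem_biun]
      constructor
      · rintro ⟨D, hD, hvD⟩
        by_cases hDC : D = C
        · left; rwa [hDC] at hvD
        · right; exact ⟨D, Finset.mem_erase.2 ⟨hDC, hD⟩, hvD⟩
      · rintro (hv | ⟨D, hD, hvD⟩)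
        · exact ⟨C, hC, hv⟩
        · exact ⟨D, Finset.mem_of_mem_erase hD, hvD⟩
    have hCclosed : ∀ v ∈ C, wmap G f v ∈ C := hCcyc.2.1
    -- head comparisons
    have hheadC : ∀ v ∈ C, p.head v = wmap G f v := fun v hv =>
      head_of_not_bst (hCnb v hv)
    have hbst'C : ∀ v ∈ C, p'.BackstepAt v := by
      intro v hv
      rw [hp'def, bst_mkC]
      exact hdisj v hv
    have hheadeq : ∀ v, v ∉ C → p'.head v = p.head v := by
      intro v hv
      by_cases hb : v ∈ ((Ac p).erase C).biUnion id
      · rw [hp'def, head_mkC_mem hb]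
        have hnb : ¬ p.BackstepAt v := (nb_iff_mem_biun hp).2 ((hsplit v).2 (Or.inr hb))
        rw [head_of_not_bst hnb]
      · have hbp : p.BackstepAt v := by
          by_contra hnb
          rcases (hsplit v).1 ((nb_iff_mem_biun hp).1 hnb) with h | h
          · exact hv h
          · exact hb h
        rw [hp'def, head_mkC_not_mem hb, head_of_bst hbp]
    -- delta
    set δ : Equiv.Perm V := (prm p' hp')⁻¹ * prm p hp with hδdef
    have hperm : prm p hp = prm p' hp' * δ := by
      rw [hδdef, mul_inv_cancel_left]
    have hδ : ∀ v, δ v = if v ∈ C then wmap G f v else v := by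
      intro v
      rw [hδdef, Equiv.Perm.mul_apply]
      by_cases hv : v ∈ C
      · rw [if_pos hv]
        have h1 : prm p hp v = wmap G f v := hheadC v hv
        rw [h1]
        have h2 : prm p' hp' (wmap G f v) = wmap G f v := by
          rw [prm_apply, head_of_bst (hbst'C _ (hCclosed v hv))]
        calc (prm p' hp')⁻¹ (wmap G f v) = (prm p' hp')⁻¹ (prm p' hp' (wmap G f v)) := by
              rw [h2]
          _ = wmap G f v := (prm p' hp').symm_apply_apply _
      · rw [if_neg hv]
        have h1 : prm p hp v = p'.head v := by
          rw [prm_apply, hheadeq v hv]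
        rw [h1]
        exact (prm p' hp').symm_apply_apply _
    -- sign of delta
    have hδsign : ((Equiv.Perm.sign δ : ℤˣ) : ℤ) = (-1) ^ (C.card - 1) := by
      rcases Nat.lt_or_ge C.card 2 with hcc | hcc
      · -- card = 1 (nonempty)
        have hc1 : C.card = 1 := by
          have := Finset.card_pos.2 hCcyc.1
          omega
        obtain ⟨v₀, hv₀⟩ := Finset.card_eq_one.1 hc1
        have hδ1 : δ = 1 := by
          apply Equiv.ext
          intro v
          rw [hδ v]
          by_cases hv : v ∈ C
          · rw [if_pos hv]
            have h1 : wmap G f v ∈ C := hCclosed v hv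
            rw [hv₀, Finset.mem_singleton] at h1
            rw [h1]
            rw [hv₀, Finset.mem_singleton] at hv
            rw [hv]
            exact (Equiv.Perm.one_apply v₀).symm
          · rw [if_neg hv]; rfl
        rw [hδ1, hc1]
        simp
      · have hnf : ∀ v ∈ C, wmap G f v ≠ v := fun v hv => cyc_no_fixed hCcyc hcc hv
        have hsupp : δ.support = C := by
          ext v
          rw [Equiv.Perm.mem_support, hδ v]
          by_cases hv : v ∈ C
          · simp [hv, hnf v hv]
          · simp [hv]
        obtain ⟨v₀, hv₀⟩ := hCcyc.1
        have hδiter : ∀ m, (⇑δ)^[m] v₀ = (wmap G f)^[m] v₀ ∧ (wmap G f)^[m] v₀ ∈ C := by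
          intro m
          induction m with
          | zero => exact ⟨rfl, hv₀⟩
          | succ m ihm =>
            rw [Function.iterate_succ_apply', Function.iterate_succ_apply', ihm.1, hδ]
            exact ⟨if_pos ihm.2, hCclosed _ ihm.2⟩
        have hcycle : δ.IsCycle := by
          refine ⟨v₀, ?_, ?_⟩
          · rw [hδ v₀, if_pos hv₀]
            exact hnf v₀ hv₀
          · intro y hy
            have hyC : y ∈ C := by
              by_contra hyc
              rw [hδ y, if_neg hyc] at hy
              exact hy rfl
            obtain ⟨m, hm⟩ := hCcyc.2.2 v₀ hv₀ y hyC
            refine ⟨(m : ℤ), ?_⟩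
            rw [zpow_natCast, perm_pow_apply, (hδiter m).1, hm]
        have := hcycle.sign
        rw [hsupp] at this
        rw [this]
        have h2 : (2 : ℕ) ≤ C.card := hcc
        have h3 : C.card = (C.card - 1) + 1 := by omega
        rw [h3]
        push_cast
        rw [pow_succ]
        ring
    -- product comparison
    have hprodp : ∏ v, G.sgn (p.i1 v) * G.sgn (p.i2 v) =
        (∏ v ∈ C, G.sgn (f v) * G.sgn (G.τ (f v))) *
          ∏ v, G.sgn (p'.i1 v) * G.sgn (p'.i2 v) := by
      rw [← Finset.prod_mul_prod_compl C (fun v => G.sgn (p.i1 v) * G.sgn (p.i2 v)),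
        ← Finset.prod_mul_prod_compl C (fun v => G.sgn (p'.i1 v) * G.sgn (p'.i2 v))]
      have h1 : ∏ v ∈ C, G.sgn (p.i1 v) * G.sgn (p.i2 v) =
          ∏ v ∈ C, G.sgn (f v) * G.sgn (G.τ (f v)) := by
        refine Finset.prod_congr rfl (fun v hv => ?_)
        rcases i2_eq p v with h | h
        · exact absurd h (hCnb v hv)
        · rw [h, hf]
      have h2 : ∏ v ∈ C, G.sgn (p'.i1 v) * G.sgn (p'.i2 v) = 1 := by
        apply Finset.prod_eq_one
        intro v hv
        rw [hbst'C v hv]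
        rcases hsgn (p'.i1 v) with h | h <;> rw [h] <;> norm_num
      have h3 : ∏ v ∈ Cᶜ, G.sgn (p.i1 v) * G.sgn (p.i2 v) =
          ∏ v ∈ Cᶜ, G.sgn (p'.i1 v) * G.sgn (p'.i2 v) := by
        refine Finset.prod_congr rfl (fun v hv => ?_)
        rw [Finset.mem_compl] at hv
        have hi2 : p'.i2 v = p.i2 v := by
          show (if v ∈ ((Ac p).erase C).biUnion id then G.τ (f v) else f v) = p.i2 v
          by_cases hb : v ∈ ((Ac p).erase C).biUnion id
          · rw [if_pos hb]
            have hnb : ¬ p.BackstepAt v := (nb_iff_mem_biun hp).2 ((hsplit v).2 (Or.inr hb))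
            rcases i2_eq p v with h | h
            · exact absurd h hnb
            · rw [h]
          · rw [if_neg hb]
            have hbp : p.BackstepAt v := by
              by_contra hnb
              rcases (hsplit v).1 ((nb_iff_mem_biun hp).1 hnb) with h | h
              · exact hv h
              · exact hb h
            rw [hbp]
        rw [hi2]
        rfl
      rw [h1, h2, h3]
      ring
    -- assemble
    have hihval := ih p' hp' hcard'
    have hsgnmul : ((Equiv.Perm.sign (prm p hp) : ℤˣ) : ℤ) =
        ((Equiv.Perm.sign (prm p' hp') : ℤˣ) : ℤ) * ((Equiv.Perm.sign δ : ℤˣ) : ℤ) := by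
      rw [hperm, map_mul, Units.val_mul]
    have hfactor : ((Equiv.Perm.sign δ : ℤˣ) : ℤ) *
        (∏ v ∈ C, G.sgn (f v) * G.sgn (G.τ (f v))) = -(sgnC G f C) := by
      have hk : 1 ≤ C.card := Finset.card_pos.2 hCcyc.1
      have h3 : C.card = (C.card - 1) + 1 := by omega
      have h4 : (-(1:ℤ)) ^ (C.card - 1) = -((-1) ^ C.card) := by
        conv_rhs => rw [h3]
        rw [pow_succ]
        ring
      rw [prod_neg_sgn, hδsign, h4]
      ring
    calc ((Equiv.Perm.sign (prm p hp) : ℤˣ) : ℤ) * ∏ v, G.sgn (p.i1 v) * G.sgn (p.i2 v)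
        = (((Equiv.Perm.sign (prm p' hp') : ℤˣ) : ℤ) *
            ∏ v, G.sgn (p'.i1 v) * G.sgn (p'.i2 v)) *
          (((Equiv.Perm.sign δ : ℤˣ) : ℤ) *
            ∏ v ∈ C, G.sgn (f v) * G.sgn (G.τ (f v))) := by
          rw [hsgnmul, hprodp]; ring
      _ = (∏ D ∈ Ac p', (-(sgnC G p'.i1 D))) * (-(sgnC G f C)) := by
          rw [hihval, hfactor]
      _ = ∏ D ∈ Ac p, (-(sgnC G p.i1 D)) := by
          have hi1 : p'.i1 = f := rfl
          rw [hi1, hAc', ← hf]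
          exact Finset.prod_erase_mul _ _ hC

end DLA

namespace DLA

open PreContributor Finset

variable {V : Type} [Fintype V] [DecidableEq V] {G : Bidirected V}

noncomputable def prmT (p : PreContributor G.toOrientedHypergraph) : Equiv.Perm V :=
  if h : p.IsContributor then prm p h else 1

lemma prmT_eq {p : PreContributor G.toOrientedHypergraph} (hp : p.IsContributor) :
    prmT p = prm p hp := dif_pos hp

noncomputable def pairsF (G : Bidirected V) (a b : V) : Finset (G.I × G.I) :=
  Finset.univ.filter (fun x => G.vtx x.1 = a ∧ G.vtx x.2 = b ∧ G.edge x.1 = G.edge x.2)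

lemma inc_eq (v : V) (e : G.E) :
    G.toOrientedHypergraph.inc v e =
      ∑ i ∈ Finset.univ.filter
        (fun i : G.I => G.vtx i = v ∧ G.edge i = e), G.sgn i := by
  rw [OrientedHypergraph.inc, ← finsum_mem_coe_finset]
  congr 1
  ext i
  simp

lemma lap_eq (a b : V) :
    G.toOrientedHypergraph.lap a b = ∑ x ∈ pairsF G a b, G.sgn x.1 * G.sgn x.2 := by
  have h2 : ∀ e : G.E, (pairsF G a b).filter (fun x => G.edge x.1 = e) =
      (Finset.univ.filter fun i : G.I => G.vtx i = a ∧ G.edge i = e) ×ˢ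
        (Finset.univ.filter fun j : G.I => G.vtx j = b ∧ G.edge j = e) := by
    intro e
    ext x
    simp only [pairsF, Finset.mem_filter, Finset.mem_product, Finset.mem_univ, true_and]
    constructor
    · rintro ⟨⟨ha, hb, hc⟩, hd⟩
      exact ⟨⟨ha, hd⟩, hb, by rw [← hc, hd]⟩
    · rintro ⟨⟨ha, hd⟩, hb, he⟩
      exact ⟨⟨ha, hb, by rw [hd, he]⟩, hd⟩
  calc G.toOrientedHypergraph.lap a b
      = ∑ e, G.toOrientedHypergraph.inc a e * G.toOrientedHypergraph.inc b e := by
        rw [OrientedHypergraph.lap, Matrix.mul_apply]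
        exact Finset.sum_congr rfl (fun e _ => by rw [Matrix.transpose_apply])
    _ = ∑ e, ∑ x ∈ (pairsF G a b).filter (fun x => G.edge x.1 = e),
          G.sgn x.1 * G.sgn x.2 := by
        refine Finset.sum_congr rfl (fun e _ => ?_)
        rw [h2 e, inc_eq, inc_eq, Finset.sum_mul_sum, Finset.sum_product]
    _ = ∑ x ∈ pairsF G a b, G.sgn x.1 * G.sgn x.2 :=
        Finset.sum_fiberwise_of_maps_to (fun x _ => Finset.mem_univ _) _

theorem det_expand :
    G.toOrientedHypergraph.lap.det =
      ∑ p ∈ Finset.univ.filter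
          (fun p : PreContributor G.toOrientedHypergraph => p.IsContributor),
        ((Equiv.Perm.sign (prmT p) : ℤˣ) : ℤ) * ∏ v, G.sgn (p.i1 v) * G.sgn (p.i2 v) := by
  have hstep2 : ∀ σ : Equiv.Perm V,
      ∑ g ∈ Fintype.piFinset (fun v => pairsF G (σ v) v),
        ∏ v, G.sgn (g v).1 * G.sgn (g v).2
      = ∑ p ∈ Finset.univ.filter
            (fun p : PreContributor G.toOrientedHypergraph => p.head = ⇑σ),
          ∏ v, G.sgn (p.i1 v) * G.sgn (p.i2 v) := by
    intro σ
    refine Finset.sum_bij'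
      (i := fun g hg =>
        { i1 := fun v => (g v).2
          i2 := fun v => (g v).1
          tail_eq := fun v => by
            have := (Fintype.mem_piFinset.1 hg v)
            simp only [pairsF, Finset.mem_filter] at this
            exact this.2.2.1
          edge_eq := fun v => by
            have := (Fintype.mem_piFinset.1 hg v)
            simp only [pairsF, Finset.mem_filter] at this
            exact this.2.2.2.symm })
      (j := fun p hp => fun v => (p.i2 v, p.i1 v)) ?_ ?_ ?_ ?_ ?_
    · intro g hg
      rw [Finset.mem_filter]
      refine ⟨Finset.mem_univ _, funext fun v => ?_⟩
      show G.vtx (g v).1 = σ v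
      have := (Fintype.mem_piFinset.1 hg v)
      simp only [pairsF, Finset.mem_filter] at this
      exact this.2.1
    · intro p hp
      rw [Finset.mem_filter] at hp
      rw [Fintype.mem_piFinset]
      intro v
      simp only [pairsF, Finset.mem_filter, Finset.mem_univ, true_and]
      refine ⟨?_, p.tail_eq v, (p.edge_eq v).symm⟩
      show G.vtx (p.i2 v) = σ v
      rw [← hp.2]
      rfl
    · intro g hg
      funext v
      rfl
    · intro p hp
      exact PC.ext rfl rfl
    · intro g hg
      exact Finset.prod_congr rfl (fun v _ => mul_comm _ _)
  rw [Matrix.det_apply]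
  calc ∑ σ : Equiv.Perm V, Equiv.Perm.sign σ • ∏ v, G.toOrientedHypergraph.lap (σ v) v
      = ∑ σ : Equiv.Perm V, ∑ p ∈ Finset.univ.filter
            (fun p : PreContributor G.toOrientedHypergraph => p.head = ⇑σ),
          ((Equiv.Perm.sign σ : ℤˣ) : ℤ) * ∏ v, G.sgn (p.i1 v) * G.sgn (p.i2 v) := by
        refine Finset.sum_congr rfl (fun σ _ => ?_)
        have h0 : ∏ v, G.toOrientedHypergraph.lap (σ v) v =
            ∏ v, ∑ x ∈ pairsF G (σ v) v, G.sgn x.1 * G.sgn x.2 :=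
          Finset.prod_congr rfl (fun v _ => lap_eq _ _)
        rw [h0, Finset.prod_univ_sum, hstep2 σ, Units.smul_def, Finset.smul_sum]
        exact Finset.sum_congr rfl (fun p _ => by rw [smul_eq_mul])
    _ = ∑ p : PreContributor G.toOrientedHypergraph, ∑ σ : Equiv.Perm V,
          (if p.head = ⇑σ then
            ((Equiv.Perm.sign σ : ℤˣ) : ℤ) * ∏ v, G.sgn (p.i1 v) * G.sgn (p.i2 v)
          else 0) := by
        rw [Finset.sum_comm]
        exact Finset.sum_congr rfl (fun σ _ => (Finset.sum_filter _ _))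
    _ = ∑ p : PreContributor G.toOrientedHypergraph,
          (if p.IsContributor then
            ((Equiv.Perm.sign (prmT p) : ℤˣ) : ℤ) * ∏ v, G.sgn (p.i1 v) * G.sgn (p.i2 v)
          else 0) := by
        refine Finset.sum_congr rfl (fun p _ => ?_)
        by_cases hp : p.IsContributor
        · rw [if_pos hp, prmT_eq hp]
          refine (Finset.sum_eq_single (prm p hp) ?_ ?_).trans ?_
          · intro σ _ hσ
            rw [if_neg]
            intro h
            apply hσ
            apply Equiv.coe_fn_injective
            exact h.symm
          · intro h
            exact absurd (Finset.mem_univ _) h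
          · exact if_pos rfl
        · rw [if_neg hp]
          apply Finset.sum_eq_zero
          intro σ _
          rw [if_neg]
          intro h
          apply hp
          rw [PreContributor.IsContributor, h]
          exact σ.surjective
    _ = ∑ p ∈ Finset.univ.filter
          (fun p : PreContributor G.toOrientedHypergraph => p.IsContributor),
        ((Equiv.Perm.sign (prmT p) : ℤˣ) : ℤ) * ∏ v, G.sgn (p.i1 v) * G.sgn (p.i2 v) :=
        (Finset.sum_filter _ _).symm

end DLA

namespace DLA

open PreContributor Finset

variable {V : Type} [Fintype V] [DecidableEq V] {G : Bidirected V}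

lemma foldl_unpack_i1 (p : PreContributor G.toOrientedHypergraph) (l : List V) :
    (List.foldl G.unpack p l).i1 = p.i1 := by
  induction l generalizing p with
  | nil => rfl
  | cons v l ih => rw [List.foldl_cons, ih]; rfl

lemma foldl_unpack_i2 (p : PreContributor G.toOrientedHypergraph) (l : List V) :
    (List.foldl G.unpack p l).i2 = fun v => if v ∈ l then G.τ (p.i1 v) else p.i2 v := by
  induction l generalizing p with
  | nil => simp
  | cons v l ih =>
    rw [List.foldl_cons, ih]
    funext u
    show (if u ∈ l then G.τ (p.i1 u) else (G.unpack p v).i2 u) = _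
    by_cases h1 : u ∈ l
    · rw [if_pos h1, if_pos (List.mem_cons.2 (Or.inr h1))]
    · rw [if_neg h1]
      show (if u = v then G.τ (p.i1 v) else p.i2 u) = _
      by_cases h2 : u = v
      · rw [if_pos h2, if_pos (List.mem_cons.2 (Or.inl h2)), h2]
      · rw [if_neg h2, if_neg (fun h => by
          rcases List.mem_cons.1 h with h | h
          · exact h2 h
          · exact h1 h)]

lemma unpackSeqOK_of (p : PreContributor G.toOrientedHypergraph) :
    ∀ l : List V, l.Nodup → (∀ v ∈ l, p.BackstepAt v) → G.UnpackSeqOK p l := by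
  intro l
  induction l generalizing p with
  | nil => intro _ _; trivial
  | cons v l ih =>
    intro hnd hbst
    refine ⟨hbst v List.mem_cons_self, ?_⟩
    refine ih (G.unpack p v) (List.Nodup.of_cons hnd) (fun u hu => ?_)
    have hne : u ≠ v := by
      intro h
      rw [h] at hu
      exact (List.nodup_cons.1 hnd).1 hu
    show (G.unpack p v).i2 u = (G.unpack p v).i1 u
    show (if u = v then G.τ (p.i1 v) else p.i2 u) = p.i1 u
    rw [if_neg hne]
    exact hbst u (List.mem_cons.2 (Or.inr hu))

lemma bst_foldl (p : PreContributor G.toOrientedHypergraph) (l : List V) (v : V) :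
    (List.foldl G.unpack p l).BackstepAt v ↔ (v ∉ l ∧ p.BackstepAt v) := by
  unfold PreContributor.BackstepAt
  rw [foldl_unpack_i1, foldl_unpack_i2]
  by_cases h : v ∈ l
  · simp only [h, if_true, not_true, false_and, iff_false]
    exact G.τ_ne (p.i1 v)
  · simp [h]

lemma act_mono {c d : PreContributor G.toOrientedHypergraph} (hact : G.Activates c d) :
    d.i1 = c.i1 ∧ Ac c ⊆ Ac d := by
  obtain ⟨hc, hd, l, hok, hfold, htc, hmin⟩ := hact
  have hi1 : d.i1 = c.i1 := by rw [← hfold, foldl_unpack_i1]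
  refine ⟨hi1, fun C hC => ?_⟩
  rw [mem_Ac] at hC ⊢
  rw [hi1]
  refine ⟨hC.1, fun v hv => ?_⟩
  rw [← hfold, bst_foldl]
  intro h
  exact hC.2 v hv h.2

lemma leA_mono {c d : PreContributor G.toOrientedHypergraph} (hle : G.leA c d) :
    d.i1 = c.i1 ∧ Ac c ⊆ Ac d := by
  induction hle with
  | refl => exact ⟨rfl, le_refl _⟩
  | tail hbc hcd ih =>
    obtain ⟨h1, h2⟩ := act_mono hcd
    exact ⟨h1.trans ih.1, ih.2.trans h2⟩

lemma maximal_iff {c : PreContributor G.toOrientedHypergraph} (hp : c.IsContributor) :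
    (¬ ∃ d, G.Activates c d) ↔ Ac c = cycF G c.i1 := by
  constructor
  · -- contrapositive : if not all cycles active, we can activate one
    intro hmax
    by_contra hne
    apply hmax
    obtain ⟨C, hCcyc, hCnA⟩ : ∃ C, C ∈ cycF G c.i1 ∧ C ∉ Ac c := by
      by_contra h
      push_neg at h
      exact hne (Finset.Subset.antisymm (Ac_sub_cycF c) h)
    have hCesyc : IsCyc G c.i1 C := mem_cycF.1 hCcyc
    have hCbst : ∀ v ∈ C, c.BackstepAt v := by
      intro v hv
      by_contra hnb
      apply hCnA
      rw [cyc_inter hCesyc (Cof_isCyc hp hnb) hv (self_mem_Cof v)]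
      exact Cof_mem_Ac hp hnb
    set l := C.toList with hl
    set d := List.foldl G.unpack c l with hd
    have hmem_l : ∀ v, v ∈ l ↔ v ∈ C := fun v => Finset.mem_toList
    have hdmk : d = mkC G c.i1 c.tail_eq (insert C (Ac c)) := by
      refine PC.ext (foldl_unpack_i1 c l) (funext fun v => ?_)
      rw [hd, foldl_unpack_i2]
      show (if v ∈ l then G.τ (c.i1 v) else c.i2 v) =
        (if v ∈ (insert C (Ac c)).biUnion id then G.τ (c.i1 v) else c.i1 v)
      by_cases h1 : v ∈ C
      · rw [if_pos ((hmem_l v).2 h1), if_pos (mem_biun.2 ⟨C, Finset.mem_insert_self _ _, h1⟩)]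
      · rw [if_neg (fun h => h1 ((hmem_l v).1 h))]
        by_cases h2 : c.BackstepAt v
        · rw [if_neg, h2]
          intro h
          obtain ⟨D, hD, hvD⟩ := mem_biun.1 h
          rcases Finset.mem_insert.1 hD with h | h
          · rw [h] at hvD; exact h1 hvD
          · exact (mem_Ac.1 h).2 v hvD h2
        · rw [if_pos (mem_biun.2 ⟨Cof c v, Finset.mem_insert.2 (Or.inr (Cof_mem_Ac hp h2)),
            self_mem_Cof v⟩)]
          rcases i2_eq c v with h | h
          · exact absurd h h2
          · exact h
    have hins : ∀ D ∈ insert C (Ac c), IsCyc G c.i1 D := by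
      intro D hD
      rcases Finset.mem_insert.1 hD with h | h
      · rw [h]; exact hCesyc
      · exact (mem_Ac.1 h).1
    have hdc : d.IsContributor := by
      rw [hdmk]
      exact mkC_contrib c.tail_eq hins
    have hAcd : Ac d = insert C (Ac c) := by
      rw [hdmk]
      exact Ac_mkC c.tail_eq hins
    refine ⟨d, hp, hdc, l, ?_, hd.symm, ?_, ?_⟩
    · exact unpackSeqOK_of c l (Finset.nodup_toList C) (fun v hv => hCbst v ((hmem_l v).1 hv))
    · rw [tc_eq hdc, tc_eq hp, hAcd, Finset.card_insert_of_notMem hCnA]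
    · intro l' hpre hne' hnel hql
      set q := List.foldl G.unpack c l' with hq
      have hq1 : q.i1 = c.i1 := foldl_unpack_i1 c l'
      have hsub : ∀ v ∈ l', v ∈ C := fun v hv => (hmem_l v).1 (hpre.subset hv)
      obtain ⟨v₀, hv₀⟩ := List.exists_mem_of_ne_nil l' hne'
      have hv₀C : v₀ ∈ C := hsub v₀ hv₀
      have hclosed : ∀ v : V, ¬ q.BackstepAt v → ¬ q.BackstepAt (wmap G c.i1 v) := by
        intro v hv
        have h1 := nb_closed hql hv
        rw [head_of_not_bst hv] at h1
        have : wmap G q.i1 v = wmap G c.i1 v := by rw [hq1]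
        rwa [this] at h1
      have hCsub : ∀ u ∈ C, ¬ q.BackstepAt u := by
        intro u hu
        obtain ⟨n, rfl⟩ := hCesyc.2.2 v₀ hv₀C u hu
        refine iterate_mem_of_closed (X := {x : V | ¬ q.BackstepAt x}) hclosed ?_ n
        show ¬ q.BackstepAt v₀
        rw [hq, bst_foldl]
        intro h
        exact h.1 hv₀
      have hCl' : ∀ u ∈ C, u ∈ l' := by
        intro u hu
        have h1 := hCsub u hu
        rw [hq, bst_foldl] at h1
        by_contra h2
        exact h1 ⟨h2, hCbst u hu⟩
      -- cardinality contradiction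
      have hlen : l'.length < l.length := by
        have hle := hpre.length_le
        rcases Nat.lt_or_ge l'.length l.length with h | h
        · exact h
        · exfalso
          exact hnel (List.IsPrefix.eq_of_length hpre (by omega))
      have hcard : C.card ≤ l'.length := by
        calc C.card ≤ l'.toFinset.card := by
              apply Finset.card_le_card
              intro u hu
              rw [List.mem_toFinset]
              exact hCl' u hu
          _ ≤ l'.length := List.toFinset_card_le l'
      rw [hl, Finset.length_toList] at hlen
      omega
  · intro heq
    rintro ⟨d, hact⟩
    obtain ⟨hc, hd, l, hok, hfold, htc, hmin⟩ := hact
    have hi1 : d.i1 = c.i1 := by rw [← hfold, foldl_unpack_i1]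
    have h1 : Ac d ⊆ Ac c := by
      rw [heq, ← hi1]
      exact Ac_sub_cycF d
    have h2 : Ac c ⊆ Ac d := (act_mono ⟨hc, hd, l, hok, hfold, htc, hmin⟩).2
    have h3 : Ac c = Ac d := Finset.Subset.antisymm h2 h1
    rw [tc_eq hd, tc_eq hc, h3] at htc
    omega

end DLA

namespace DLA

open PreContributor Finset

variable {V : Type} [Fintype V] [DecidableEq V] {G : Bidirected V}

/-- tails Finset -/
noncomputable def FF (G : Bidirected V) : Finset (V → G.I) :=
  Fintype.piFinset (fun v => Finset.univ.filter (fun i : G.I => G.vtx i = v))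

lemma mem_FF {f : V → G.I} : f ∈ FF G ↔ ∀ v, G.vtx (f v) = v := by
  simp [FF, Fintype.mem_piFinset]

/-- all cycles negative -/
def allNeg (G : Bidirected V) (f : V → G.I) : Prop :=
  ∀ C ∈ cycF G f, sgnC G f C = -1

lemma det_main (hsgn : ∀ i, G.sgn i = 1 ∨ G.sgn i = -1) :
    G.toOrientedHypergraph.lap.det =
      ∑ f ∈ (FF G).filter (allNeg G), (2 : ℤ) ^ (cycF G f).card := by
  rw [det_expand]
  have step1 : ∑ p ∈ Finset.univ.filter
        (fun p : PreContributor G.toOrientedHypergraph => p.IsContributor),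
      ((Equiv.Perm.sign (prmT p) : ℤˣ) : ℤ) * ∏ v, G.sgn (p.i1 v) * G.sgn (p.i2 v)
      = ∑ p ∈ Finset.univ.filter
          (fun p : PreContributor G.toOrientedHypergraph => p.IsContributor),
        ∏ C ∈ Ac p, (-(sgnC G p.i1 C)) := by
    refine Finset.sum_congr rfl (fun p hp => ?_)
    have hpc : p.IsContributor := (Finset.mem_filter.1 hp).2
    rw [prmT_eq hpc]
    exact val_eq hsgn (Ac p).card p hpc rfl
  rw [step1]
  have step2 : ∑ p ∈ Finset.univ.filter
        (fun p : PreContributor G.toOrientedHypergraph => p.IsContributor),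
      ∏ C ∈ Ac p, (-(sgnC G p.i1 C))
      = ∑ f ∈ FF G, ∑ p ∈ (Finset.univ.filter
          (fun p : PreContributor G.toOrientedHypergraph => p.IsContributor)).filter
            (fun p => p.i1 = f),
        ∏ C ∈ Ac p, (-(sgnC G p.i1 C)) := by
    refine (Finset.sum_fiberwise_of_maps_to (fun p _ => ?_) _).symm
    exact mem_FF.2 p.tail_eq
  rw [step2, Finset.sum_filter]
  refine Finset.sum_congr rfl (fun f hfF => ?_)
  have hf : ∀ v, G.vtx (f v) = v := mem_FF.1 hfF
  have step3 : ∑ p ∈ (Finset.univ.filter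
        (fun p : PreContributor G.toOrientedHypergraph => p.IsContributor)).filter
          (fun p => p.i1 = f),
      ∏ C ∈ Ac p, (-(sgnC G p.i1 C))
      = ∑ A ∈ (cycF G f).powerset, ∏ C ∈ A, (-(sgnC G f C)) := by
    refine Finset.sum_bij' (i := fun p _ => Ac p) (j := fun A hA => mkC G f hf A)
      ?_ ?_ ?_ ?_ ?_
    · intro p hp
      rw [Finset.mem_filter, Finset.mem_filter] at hp
      obtain ⟨⟨-, hpc⟩, hpi⟩ := hp
      subst hpi
      rw [Finset.mem_powerset]
      exact Ac_sub_cycF p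
    · intro A hA
      rw [Finset.mem_powerset] at hA
      have hcyc : ∀ C ∈ A, IsCyc G f C := fun C hC => mem_cycF.1 (hA hC)
      rw [Finset.mem_filter, Finset.mem_filter]
      exact ⟨⟨Finset.mem_univ _, mkC_contrib hf hcyc⟩, rfl⟩
    · intro p hp
      rw [Finset.mem_filter, Finset.mem_filter] at hp
      obtain ⟨⟨-, hpc⟩, hpi⟩ := hp
      subst hpi
      exact mkC_recover hpc
    · intro A hA
      rw [Finset.mem_powerset] at hA
      exact Ac_mkC hf (fun C hC => mem_cycF.1 (hA hC))
    · intro p hp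
      rw [Finset.mem_filter, Finset.mem_filter] at hp
      obtain ⟨⟨-, hpc⟩, hpi⟩ := hp
      subst hpi
      rfl
  rw [step3]
  have step4 : ∑ A ∈ (cycF G f).powerset, ∏ C ∈ A, (-(sgnC G f C))
      = ∏ C ∈ cycF G f, (-(sgnC G f C) + 1) := by
    rw [Finset.prod_add]
    refine Finset.sum_congr rfl (fun A _ => ?_)
    rw [Finset.prod_const_one, mul_one]
  rw [step4]
  by_cases hall : allNeg G f
  · rw [if_pos hall]
    have h2 : ∀ C ∈ cycF G f, -(sgnC G f C) + 1 = 2 := by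
      intro C hC
      rw [hall C hC]
      norm_num
    rw [Finset.prod_congr rfl h2, Finset.prod_const]
  · rw [if_neg hall]
    obtain ⟨C, hC, hCne⟩ : ∃ C ∈ cycF G f, sgnC G f C ≠ -1 := by
      by_contra h
      push_neg at h
      exact hall h
    have hC1 : sgnC G f C = 1 := by
      rcases sgnC_pm hsgn f C with h | h
      · exact h
      · exact absurd h hCne
    refine Finset.prod_eq_zero hC ?_
    rw [hC1]
    norm_num

end DLA

namespace DLA

open PreContributor Finset

variable {V : Type} [Fintype V] [DecidableEq V] {G : Bidirected V}

lemma pc_zero_of (hsgn : ∀ i, G.sgn i = 1 ∨ G.sgn i = -1) {f : V → G.I}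
    (hall : allNeg G f) {e : PreContributor G.toOrientedHypergraph}
    (hec : e.IsContributor) (hei : e.i1 = f) (hsub : Ac e ⊆ cycF G f) : pc e = 0 := by
  rw [pc_eq hec, Finset.card_eq_zero, Finset.filter_eq_empty_iff]
  intro C hC
  rw [hei, hall C (hsub hC)]
  norm_num

lemma mk_max_mem (hsgn : ∀ i, G.sgn i = 1 ∨ G.sgn i = -1) {f : V → G.I}
    (hf : ∀ v, G.vtx (f v) = v) (hall : allNeg G f) :
    (mkC G f hf (cycF G f)).IsContributor ∧
    (¬ ∃ d, G.Activates (mkC G f hf (cycF G f)) d) ∧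
    ∀ d, G.ActEq (mkC G f hf (cycF G f)) d → pc d = 0 := by
  set c := mkC G f hf (cycF G f) with hc
  have hcyc : ∀ C ∈ cycF G f, IsCyc G f C := fun C hC => mem_cycF.1 hC
  have hcc : c.IsContributor := mkC_contrib hf hcyc
  have hi1 : c.i1 = f := rfl
  have hAc : Ac c = cycF G f := Ac_mkC hf hcyc
  have hmax : ¬ ∃ d, G.Activates c d := (maximal_iff hcc).2 (by rw [hAc, hi1])
  refine ⟨hcc, hmax, ?_⟩
  intro d hde
  rcases hde with hle | hle
  · rcases Relation.ReflTransGen.cases_head hle with heq | ⟨x, hax, -⟩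
    · rw [← heq]
      exact pc_zero_of hsgn hall hcc hi1 (by rw [hAc])
    · exact absurd ⟨x, hax⟩ hmax
  · have hdc : d.IsContributor := by
      rcases Relation.ReflTransGen.cases_head hle with heq | ⟨x, hax, -⟩
      · rw [heq]; exact hcc
      · exact hax.1
    obtain ⟨hi1d, hsub⟩ := leA_mono hle
    refine pc_zero_of hsgn hall hdc (by rw [← hi1d, hi1]) ?_
    rw [← hAc]
    exact hsub

lemma Mset_allNeg (hsgn : ∀ i, G.sgn i = 1 ∨ G.sgn i = -1)
    {c : PreContributor G.toOrientedHypergraph} (hcc : c.IsContributor)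
    (hmax : ¬ ∃ d, G.Activates c d) (hpc0 : ∀ d, G.ActEq c d → pc d = 0) :
    allNeg G c.i1 := by
  have hAc : Ac c = cycF G c.i1 := (maximal_iff hcc).1 hmax
  intro C hC
  have hpcc : pc c = 0 := hpc0 c (Or.inl Relation.ReflTransGen.refl)
  rw [pc_eq hcc, Finset.card_eq_zero, Finset.filter_eq_empty_iff] at hpcc
  have hCne1 : ¬ sgnC G c.i1 C = 1 := hpcc (by rw [hAc]; exact hC)
  rcases sgnC_pm hsgn c.i1 C with h | h
  · exact absurd h hCne1
  · exact h

lemma Mset_card (hsgn : ∀ i, G.sgn i = 1 ∨ G.sgn i = -1) :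
    (∑ᶠ c ∈ {c : PreContributor G.toOrientedHypergraph | c.IsContributor ∧
        (¬ ∃ d, G.Activates c d) ∧ ∀ d, G.ActEq c d → pc d = 0},
      (2 : ℤ) ^ nc c)
    = ∑ f ∈ (FF G).filter (allNeg G), (2 : ℤ) ^ (cycF G f).card := by
  have hset : {c : PreContributor G.toOrientedHypergraph | c.IsContributor ∧
      (¬ ∃ d, G.Activates c d) ∧ ∀ d, G.ActEq c d → pc d = 0} =
      ↑(Finset.univ.filter (fun c : PreContributor G.toOrientedHypergraph =>
        c.IsContributor ∧ (¬ ∃ d, G.Activates c d) ∧ ∀ d, G.ActEq c d → pc d = 0)) := by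
    ext c
    simp
  rw [hset, finsum_mem_coe_finset]
  refine Finset.sum_bij' (i := fun c _ => c.i1)
    (j := fun f hf => mkC G f
      (fun v => (Finset.mem_filter.1 (Fintype.mem_piFinset.1
        (Finset.mem_filter.1 hf).1 v)).2) (cycF G f)) ?_ ?_ ?_ ?_ ?_
  · intro c hc
    rw [Finset.mem_filter] at hc
    obtain ⟨-, hcc, hmax, hpc0⟩ := hc
    exact Finset.mem_filter.2 ⟨mem_FF.2 c.tail_eq, Mset_allNeg hsgn hcc hmax hpc0⟩
  · intro f hfm
    have hall : allNeg G f := (Finset.mem_filter.1 hfm).2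
    have hf : ∀ v, G.vtx (f v) = v := mem_FF.1 (Finset.mem_filter.1 hfm).1
    have h3 := mk_max_mem hsgn hf hall
    exact Finset.mem_filter.2 ⟨Finset.mem_univ _, h3⟩
  · intro c hc
    rw [Finset.mem_filter] at hc
    obtain ⟨-, hcc, hmax, hpc0⟩ := hc
    have hAc : Ac c = cycF G c.i1 := (maximal_iff hcc).1 hmax
    beta_reduce
    rw [← hAc]
    exact mkC_recover hcc
  · intro f hfm
    rfl
  · intro c hc
    rw [Finset.mem_filter] at hc
    obtain ⟨-, hcc, hmax, hpc0⟩ := hc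
    have hAc : Ac c = cycF G c.i1 := (maximal_iff hcc).1 hmax
    have hall := Mset_allNeg hsgn hcc hmax hpc0
    rw [nc_eq hcc, hAc, Finset.filter_true_of_mem hall]

end DLA

open PreContributor in
/-- For a signed graph `G` (a bidirected graph via an orientation,
each of whose connected components contains an adjacency),
`det(L_G) = ∑_{c ∈ M⁻} 2^{nc(c)}` where `M⁻` is the set of maximal elements of the
positive-circle-free activation classes of contributors of `G` and `nc(c)` is the
number of negative circles of `c`.  In particular `det(L_G) ≥ 0`, and
`det(L_G) = 0` iff every activation class contains a positive circle in its
maximal element. -/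
theorem det_lap_maximal_contributors {V : Type} [Fintype V] [DecidableEq V]
    (G : Bidirected V) (hsgn : ∀ i, G.sgn i = 1 ∨ G.sgn i = -1)
    (hG : G.EveryComponentHasAdjacency) :
    G.toOrientedHypergraph.lap.det =
      (∑ᶠ c ∈ {c : PreContributor G.toOrientedHypergraph | c.IsContributor ∧
          (¬ ∃ d, G.Activates c d) ∧ ∀ d, G.ActEq c d → pc d = 0},
        (2 : ℤ) ^ nc c) ∧
    0 ≤ G.toOrientedHypergraph.lap.det ∧
    (G.toOrientedHypergraph.lap.det = 0 ↔
      ∀ c : PreContributor G.toOrientedHypergraph, c.IsContributor →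
        (¬ ∃ d, G.Activates c d) → 1 ≤ pc c) := by
  have hdet := DLA.det_main (G := G) hsgn
  refine ⟨hdet.trans (DLA.Mset_card hsgn).symm, ?_, ?_⟩
  · rw [hdet]
    refine Finset.sum_nonneg (fun f _ => ?_)
    positivity
  · rw [hdet]
    constructor
    · intro h0 c hcc hmax
      have hAc : DLA.Ac c = DLA.cycF G c.i1 := (DLA.maximal_iff hcc).1 hmax
      have hnotall : ¬ DLA.allNeg G c.i1 := by
        intro hall
        have hmem : c.i1 ∈ (DLA.FF G).filter (DLA.allNeg G) :=
          Finset.mem_filter.2 ⟨DLA.mem_FF.2 c.tail_eq, hall⟩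
        have hpos : (0 : ℤ) < ∑ f ∈ (DLA.FF G).filter (DLA.allNeg G),
            (2 : ℤ) ^ (DLA.cycF G f).card :=
          Finset.sum_pos (fun f _ => by positivity) ⟨c.i1, hmem⟩
        rw [h0] at hpos
        exact lt_irrefl _ hpos
      obtain ⟨C, hC, hCne⟩ : ∃ C ∈ DLA.cycF G c.i1, DLA.sgnC G c.i1 C ≠ -1 := by
        by_contra h
        push_neg at h
        exact hnotall h
      have hC1 : DLA.sgnC G c.i1 C = 1 := (DLA.sgnC_pm hsgn _ C).resolve_right hCne
      rw [DLA.pc_eq hcc]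
      have hcard : 0 < ((DLA.Ac c).filter
          (fun C => DLA.sgnC G c.i1 C = 1)).card :=
        Finset.card_pos.2 ⟨C, Finset.mem_filter.2 ⟨by rw [hAc]; exact hC, hC1⟩⟩
      omega
    · intro hall1
      have hempty : (DLA.FF G).filter (DLA.allNeg G) = ∅ := by
        rw [Finset.eq_empty_iff_forall_notMem]
        intro f hmem
        have hf : ∀ v, G.vtx (f v) = v := DLA.mem_FF.1 (Finset.mem_filter.1 hmem).1
        have hall : DLA.allNeg G f := (Finset.mem_filter.1 hmem).2
        have h3 := DLA.mk_max_mem hsgn hf hall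
        have h4 := hall1 _ h3.1 h3.2.1
        have h5 := h3.2.2 _ (Or.inl Relation.ReflTransGen.refl)
        omega
      rw [hempty, Finset.sum_empty]
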